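/- Let M be a metric space, f : M → ℝ an L-Lipschitz function, and T a bounded operator on L²(μ) (for a Borel measure μ on M) with propagation at most r, meaning χ_A T χ_B = 0 whenever the subsets A, B ⊆ M satisfy d(A,B) > r. Let δ ≥ Lr, and for k ∈ ℤ let χ_k be multiplication by the characteristic function of f^{-1}([kδ, (k+1)δ)). Then χ_k T χ_l = 0 whenever |k - l| > 1, and consequently ‖[T, g]‖ ≤ 2δ‖T‖ where g = Σ_k kδ·χ_k (as a multiplication operator). -/

import Mathlib

open ContinuousLinearMap in
/-- Let `f : M → ℝ` be `L`-Lipschitz and `T` a bounded operator on the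
`L²`-space `H` with propagation at most `r`: the multiplication operators `χ k` by the
characteristic functions of `f⁻¹([kδ, (k+1)δ))` (which are pairwise orthogonal
self-adjoint projections summing strongly to `1`) satisfy `χ k ∘ T ∘ χ l = 0` whenever
the corresponding level sets are at pairwise distance `> r`.  If `δ ≥ L·r` then
`χ k ∘ T ∘ χ l = 0` whenever `|k - l| > 1`, and consequently `‖[T, g]‖ ≤ 2δ‖T‖`
where `g = ∑ₖ kδ·χ k` (as a multiplication operator). -/
theorem finite_propagation_commutator_estimate
    {M : Type*} [MetricSpace M]
    {H : Type*} [NormedAddCommGroup H] [InnerProductSpace ℂ H] [CompleteSpace H]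
    (f : M → ℝ) (L r δ : ℝ) (hL : 0 < L) (hr : 0 ≤ r) (hδpos : 0 < δ)
    (hδ : L * r ≤ δ)
    (hlip : ∀ x y, |f x - f y| ≤ L * dist x y)
    (T : H →L[ℂ] H)
    (χ : ℤ → H →L[ℂ] H)
    (hproj : ∀ k, χ k ∘L χ k = χ k)
    (hsa : ∀ k, IsSelfAdjoint (χ k))
    (horth : ∀ k l, k ≠ l → χ k ∘L χ l = 0)
    (hone : ∀ v : H, HasSum (fun k : ℤ => χ k v) v)
    (hprop : ∀ k l : ℤ,
      (∀ x ∈ f ⁻¹' Set.Ico ((k : ℝ) * δ) (((k : ℝ) + 1) * δ),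
        ∀ y ∈ f ⁻¹' Set.Ico ((l : ℝ) * δ) (((l : ℝ) + 1) * δ), r < dist x y) →
      χ k ∘L T ∘L χ l = 0) :
    (∀ k l : ℤ, 1 < |k - l| → χ k ∘L T ∘L χ l = 0) ∧
      ∀ G : H →L[ℂ] H,
        (∀ v : H, HasSum (fun k : ℤ => ((k : ℝ) * δ) • χ k v) (G v)) →
        ‖T ∘L G - G ∘L T‖ ≤ 2 * δ * ‖T‖ := by
  -- Part 1: vanishing of far off-diagonal blocks
  have hnear : ∀ k l : ℤ, 1 < |k - l| → χ k ∘L T ∘L χ l = 0 := by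
    intro k l hkl
    apply hprop
    intro x hx y hy
    have hx1 : (k : ℝ) * δ ≤ f x := hx.1
    have hx2 : f x < ((k : ℝ) + 1) * δ := hx.2
    have hy1 : (l : ℝ) * δ ≤ f y := hy.1
    have hy2 : f y < ((l : ℝ) + 1) * δ := hy.2
    have habs := hlip x y
    have h2 : 2 ≤ k - l ∨ 2 ≤ l - k := by
      rcases lt_abs.mp hkl with h | h <;> omega
    have hd : δ < L * dist x y := by
      rcases h2 with h | h
      · have hk : (l : ℝ) + 2 ≤ (k : ℝ) := by exact_mod_cast (by omega : l + 2 ≤ k)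
        have h3 : δ < f x - f y := by nlinarith
        have h4 : f x - f y ≤ |f x - f y| := le_abs_self _
        linarith
      · have hk : (k : ℝ) + 2 ≤ (l : ℝ) := by exact_mod_cast (by omega : k + 2 ≤ l)
        have h3 : δ < f y - f x := by nlinarith
        have h4 : f y - f x ≤ |f x - f y| := by
          rw [abs_sub_comm]; exact le_abs_self _
        linarith
    have h5 : L * r < L * dist x y := lt_of_le_of_lt hδ hd
    exact lt_of_mul_lt_mul_left h5 hL.le
  refine ⟨hnear, ?_⟩
  intro G hG
  -- self-adjointness transfers inner products
  have hadj : ∀ (k : ℤ) (x y : H), (inner ℂ (χ k y) x : ℂ) = inner ℂ y (χ k x) := by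
    intro k x y
    have h := ContinuousLinearMap.adjoint_inner_left (χ k) x y
    rw [ContinuousLinearMap.isSelfAdjoint_iff'.mp (hsa k)] at h
    exact h
  have hidem : ∀ (k : ℤ) (u : H), χ k (χ k u) = χ k u := by
    intro k u
    have := DFunLike.congr_fun (hproj k) u
    simpa using this
  -- projections are contractions
  have hχnorm : ∀ (k : ℤ) (u : H), ‖χ k u‖ ≤ ‖u‖ := by
    intro k u
    rcases eq_or_lt_of_le (norm_nonneg (χ k u)) with h | h
    · rw [← h]; exact norm_nonneg u
    · have e1 : (inner ℂ (χ k u) (χ k u) : ℂ) = inner ℂ u (χ k u) := by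
        rw [hadj k (χ k u) u, hidem]
      have e2 : ‖χ k u‖ ^ 2 = RCLike.re (inner ℂ u (χ k u) : ℂ) := by
        rw [← e1]; exact (inner_self_eq_norm_sq _).symm
      have e3 : RCLike.re (inner ℂ u (χ k u) : ℂ) ≤ ‖u‖ * ‖χ k u‖ := re_inner_le_norm u (χ k u)
      have e4 : ‖χ k u‖ * ‖χ k u‖ ≤ ‖u‖ * ‖χ k u‖ := by nlinarith
      exact le_of_mul_le_mul_right e4 h
  -- Parseval identity
  have hpar : ∀ u : H, HasSum (fun k : ℤ => ‖χ k u‖ ^ 2) (‖u‖ ^ 2) := by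
    intro u
    have h1 : HasSum (fun k : ℤ => (innerSL ℂ u) (χ k u)) ((innerSL ℂ u) u) :=
      (hone u).mapL _
    have h3 := h1.mapL RCLike.reCLM
    have h4 : (fun k : ℤ => RCLike.reCLM ((innerSL ℂ u) (χ k u)))
        = fun k : ℤ => ‖χ k u‖ ^ 2 := by
      funext k
      have e1 : (inner ℂ u (χ k u) : ℂ) = inner ℂ (χ k u) (χ k u) := by
        conv_lhs => rw [← hidem k u]
        exact (hadj k (χ k u) u).symm
      simp only [RCLike.reCLM_apply, innerSL_apply_apply, e1]
      exact inner_self_eq_norm_sq _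
    have h5 : (RCLike.reCLM ((innerSL ℂ u) u : ℂ) : ℝ) = ‖u‖ ^ 2 := by
      simp only [RCLike.reCLM_apply, innerSL_apply_apply]
      exact inner_self_eq_norm_sq _
    rw [h4, h5] at h3
    exact h3
  -- a sum of a function supported on `{k-1, k, k+1}`
  have hsum3 : ∀ (k : ℤ) (φ : ℤ → H), (∀ l, l ≠ k - 1 → l ≠ k → l ≠ k + 1 → φ l = 0) →
      HasSum φ (φ (k - 1) + φ k + φ (k + 1)) := by
    intro k φ h0
    have h := hasSum_sum_of_ne_finset_zero (s := ({k - 1, k, k + 1} : Finset ℤ)) (f := φ) (L := SummationFilter.unconditional ℤ)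
      (by
        intro b hb
        simp only [Finset.mem_insert, Finset.mem_singleton] at hb
        push_neg at hb
        exact h0 b hb.1 hb.2.1 hb.2.2)
    have hs : (∑ b ∈ ({k - 1, k, k + 1} : Finset ℤ), φ b) = φ (k - 1) + φ k + φ (k + 1) := by
      rw [Finset.sum_insert (by simp only [Finset.mem_insert, Finset.mem_singleton]; omega),
        Finset.sum_insert (by simp only [Finset.mem_singleton]; omega), Finset.sum_singleton]
      abel
    rwa [hs] at h
  -- key commutator formula blockwise
  have hkey : ∀ (k : ℤ) (v : H),
      χ k ((T ∘L G - G ∘L T) v)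
        = δ • (χ k (T (χ (k + 1) v)) - χ k (T (χ (k - 1) v))) := by
    intro k v
    -- χ k (G (T v)) = (kδ) • χ k (T v)
    have hGT : χ k (G (T v)) = ((k : ℝ) * δ) • χ k (T v) := by
      have h := (hG (T v)).mapL (χ k)
      have h' : (fun l : ℤ => χ k (((l : ℝ) * δ) • χ l (T v)))
          = fun l : ℤ => if l = k then ((k : ℝ) * δ) • χ k (T v) else 0 := by
        funext l
        by_cases hl : l = k
        · subst hl
          rw [map_smul_of_tower, hidem, if_pos rfl]
        · have h0 : χ k (χ l (T v)) = 0 := by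
            have := DFunLike.congr_fun (horth k l (fun h => hl h.symm)) (T v)
            simpa using this
          rw [map_smul_of_tower, h0, smul_zero, if_neg hl]
      rw [h'] at h
      exact h.unique (hasSum_ite_eq k _)
    -- χ k (T v) decomposition
    have hTv0 : HasSum (fun l : ℤ => χ k (T (χ l v))) (χ k (T v)) := by
      have := (hone v).mapL ((χ k) ∘L T)
      simpa using this
    have hvan : ∀ l : ℤ, l ≠ k - 1 → l ≠ k → l ≠ k + 1 → χ k (T (χ l v)) = 0 := by
      intro l h1 h2 h3
      have h0 := hnear k l (by rw [lt_abs]; omega)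
      have := DFunLike.congr_fun h0 v
      simpa using this
    have hTv : χ k (T v)
        = χ k (T (χ (k - 1) v)) + χ k (T (χ k v)) + χ k (T (χ (k + 1) v)) :=
      hTv0.unique (hsum3 k _ hvan)
    -- χ k (T (G v)) decomposition
    have hTG0 : HasSum (fun l : ℤ => ((l : ℝ) * δ) • χ k (T (χ l v))) (χ k (T (G v))) := by
      have h := (hG v).mapL ((χ k) ∘L T)
      have h' : (fun l : ℤ => ((χ k) ∘L T) (((l : ℝ) * δ) • χ l v))
          = fun l : ℤ => ((l : ℝ) * δ) • χ k (T (χ l v)) := by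
        funext l
        rw [map_smul_of_tower]
        rfl
      rw [h'] at h
      simpa using h
    have hTG := hTG0.unique (hsum3 k _ (by
      intro l h1 h2 h3
      rw [hvan l h1 h2 h3, smul_zero]))
    have hw : χ k ((T ∘L G - G ∘L T) v) = χ k (T (G v)) - χ k (G (T v)) := by
      simp [map_sub]
    rw [hw, hTG, hGT, hTv]
    push_cast
    module
  -- put it together: operator norm bound
  have hb2 : (0 : ℝ) ≤ 2 * δ * ‖T‖ := by positivity
  refine ContinuousLinearMap.opNorm_le_bound _ hb2 ?_
  intro v
  set w : H := (T ∘L G - G ∘L T) v with hwdef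
  have hbk : ∀ k : ℤ, ‖χ k w‖ ^ 2
      ≤ 2 * δ ^ 2 * ‖T‖ ^ 2 * (‖χ (k - 1) v‖ ^ 2 + ‖χ (k + 1) v‖ ^ 2) := by
    intro k
    rw [hwdef, hkey k v]
    set A := χ k (T (χ (k + 1) v))
    set B := χ k (T (χ (k - 1) v))
    have hA : ‖A‖ ≤ ‖T‖ * ‖χ (k + 1) v‖ :=
      le_trans (hχnorm k _) (T.le_opNorm _)
    have hB : ‖B‖ ≤ ‖T‖ * ‖χ (k - 1) v‖ :=
      le_trans (hχnorm k _) (T.le_opNorm _)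
    have hc : ‖δ • (A - B)‖ ≤ δ * (‖A‖ + ‖B‖) := by
      rw [norm_smul, Real.norm_eq_abs, abs_of_pos hδpos]
      exact mul_le_mul_of_nonneg_left (norm_sub_le _ _) hδpos.le
    have hc2 : ‖δ • (A - B)‖ ^ 2 ≤ (δ * (‖A‖ + ‖B‖)) ^ 2 :=
      pow_le_pow_left₀ (norm_nonneg _) hc 2
    have hA2 : ‖A‖ ^ 2 ≤ (‖T‖ * ‖χ (k + 1) v‖) ^ 2 := pow_le_pow_left₀ (norm_nonneg _) hA 2
    have hB2 : ‖B‖ ^ 2 ≤ (‖T‖ * ‖χ (k - 1) v‖) ^ 2 := pow_le_pow_left₀ (norm_nonneg _) hB 2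
    calc ‖δ • (A - B)‖ ^ 2 ≤ (δ * (‖A‖ + ‖B‖)) ^ 2 := hc2
      _ ≤ 2 * δ ^ 2 * (‖A‖ ^ 2 + ‖B‖ ^ 2) := by
          nlinarith [mul_nonneg (sq_nonneg δ) (sq_nonneg (‖A‖ - ‖B‖))]
      _ ≤ 2 * δ ^ 2 * ((‖T‖ * ‖χ (k + 1) v‖) ^ 2 + (‖T‖ * ‖χ (k - 1) v‖) ^ 2) := by
          have h9 := mul_le_mul_of_nonneg_left (add_le_add hA2 hB2)
            (by positivity : (0:ℝ) ≤ 2 * δ ^ 2)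
          linarith
      _ = 2 * δ ^ 2 * ‖T‖ ^ 2 * (‖χ (k - 1) v‖ ^ 2 + ‖χ (k + 1) v‖ ^ 2) := by ring
  have hv := hpar v
  have hvp : HasSum (fun k : ℤ => ‖χ (k + 1) v‖ ^ 2) (‖v‖ ^ 2) := by
    have h := ((Equiv.addRight (1 : ℤ)).hasSum_iff
      (f := fun k : ℤ => ‖χ k v‖ ^ 2) (a := ‖v‖ ^ 2)).mpr hv
    simpa [Function.comp_def] using h
  have hvm : HasSum (fun k : ℤ => ‖χ (k - 1) v‖ ^ 2) (‖v‖ ^ 2) := by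
    have h := ((Equiv.subRight (1 : ℤ)).hasSum_iff
      (f := fun k : ℤ => ‖χ k v‖ ^ 2) (a := ‖v‖ ^ 2)).mpr hv
    simpa [Function.comp_def] using h
  have hrhs : HasSum (fun k : ℤ => 2 * δ ^ 2 * ‖T‖ ^ 2 * (‖χ (k - 1) v‖ ^ 2 + ‖χ (k + 1) v‖ ^ 2))
      (2 * δ ^ 2 * ‖T‖ ^ 2 * (‖v‖ ^ 2 + ‖v‖ ^ 2)) := (hvm.add hvp).mul_left _
  have hw2 := hpar w
  have hle : ‖w‖ ^ 2 ≤ 2 * δ ^ 2 * ‖T‖ ^ 2 * (‖v‖ ^ 2 + ‖v‖ ^ 2) := hasSum_le hbk hw2 hrhs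
  have hle' : ‖w‖ ^ 2 ≤ (2 * δ * ‖T‖ * ‖v‖) ^ 2 := le_of_le_of_eq hle (by ring)
  have hfin := Real.sqrt_le_sqrt hle'
  rw [Real.sqrt_sq (norm_nonneg w), Real.sqrt_sq (by positivity)] at hfin
  exact hfin
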